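/- arXiv:0812.2300 — 2 statements merged into one kernel-verified Lean document; each statement's English description precedes it below -/
import Mathlib

section
/- Let P be a join-semilattice such that for every x ∈ P the set {y ∈ P : x ≰ y} is a union of finitely many (possibly zero) ideals of P, and suppose Δ(J(P)), ordered by inclusion, is well-founded. Then there exists a well-founded poset Q such that P embeds into I_{<ω}(Q) as a join-subsemilattice. -/
open Set

/-- The poset `Ω(ω*)`: pairs `(i,j)` of naturals with `i < j`,
ordered by `(i,j) ≤ (i',j')` iff `i' ≤ i ∧ j ≤ j'`. We only need the carrier and the join. -/
abbrev OmegaStar : Type := {p : ℕ × ℕ // p.1 < p.2}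

/-- The join in `Ω(ω*)`: `(i,j) ⊔ (i',j') = (min i i', max j j')`. -/
def omegaJoin (a b : OmegaStar) : OmegaStar :=
  ⟨(min a.1.1 b.1.1, max a.1.2 b.1.2),
    lt_of_le_of_lt (min_le_left _ _) (lt_of_lt_of_le a.2 (le_max_left _ _))⟩

/-- `Ω̲(ω*)`: `Ω(ω*)` with a new least element (`none`) adjoined. -/
abbrev OmegaStarBot : Type := Option OmegaStar

/-- The join in `Ω̲(ω*)`. -/
def omegaBotJoin : OmegaStarBot → OmegaStarBot → OmegaStarBot
  | none, b => b
  | a, none => a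
  | some a, some b => some (omegaJoin a b)

/-- `I_{<ω}(Q)`: the finitely generated initial segments of `Q`,
i.e. downward closures of finite subsets of `Q` (including `∅`). -/
def FinGenInit (Q : Type*) [Preorder Q] : Set (Set Q) :=
  {S | ∃ F : Finset Q, S = {x | ∃ y ∈ F, x ≤ y}}

/-- An ideal of a poset: a nonempty, up-directed, downward closed subset. -/
def IsIdeal {P : Type*} [Preorder P] (I : Set P) : Prop :=
  I.Nonempty ∧ (∀ x ∈ I, ∀ y ∈ I, ∃ z ∈ I, x ≤ z ∧ y ≤ z) ∧
    ∀ x y : P, x ≤ y → y ∈ I → x ∈ I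

/-- A completely meet-irreducible ideal: an ideal `I` for which there is an ideal `J ⊋ I`
contained in every ideal strictly containing `I`. -/
def CMIdeal {P : Type*} [Preorder P] (I : Set P) : Prop :=
  IsIdeal I ∧ ∃ J : Set P, IsIdeal J ∧ I ⊂ J ∧ ∀ K : Set P, IsIdeal K → I ⊂ K → J ⊆ K

/-- An ideal of a sub-poset `P` of `α`: a subset of `P`, nonempty, up-directed,
downward closed within `P`. -/
def IsIdealIn {α : Type*} [Preorder α] (P I : Set α) : Prop :=
  I ⊆ P ∧ I.Nonempty ∧ (∀ x ∈ I, ∀ y ∈ I, ∃ z ∈ I, x ≤ z ∧ y ≤ z) ∧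
    ∀ x ∈ P, ∀ y ∈ I, x ≤ y → x ∈ I

/-- A completely meet-irreducible ideal of the sub-poset `P`. -/
def CMIdealIn {α : Type*} [Preorder α] (P I : Set α) : Prop :=
  IsIdealIn P I ∧ ∃ J : Set α, IsIdealIn P J ∧ I ⊂ J ∧
    ∀ K : Set α, IsIdealIn P K → I ⊂ K → J ⊆ K

/-- `{x} ∨ J`, the ideal `{z : z ≤ x ⊔ y for some y ∈ J}`. -/
def JoinUp {P : Type*} [SemilatticeSup P] (x : P) (J : Set P) : Set P :=
  {z | ∃ y ∈ J, z ≤ x ⊔ y}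

/-- A nonempty chain `𝓘` of ideals is separating if for every `I ∈ 𝓘` with `I ≠ ⋃𝓘` and every
`x ∈ ⋃𝓘 \ I` there is `J ∈ 𝓘` with `I ⊄ {x} ∨ J`. -/
def Separating {P : Type*} [SemilatticeSup P] (𝓘 : Set (Set P)) : Prop :=
  ∀ I ∈ 𝓘, I ≠ ⋃₀ 𝓘 → ∀ x ∈ (⋃₀ 𝓘) \ I, ∃ J ∈ 𝓘, ¬ I ⊆ JoinUp x J

/-- An independent subset of a join-semilattice: no member is below the join of finitely many
of the others. -/
def IndepSet {P : Type*} [SemilatticeSup P] (X : Set P) : Prop :=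
  ∀ x ∈ X, ∀ F : Finset P, ∀ hF : F.Nonempty, ↑F ⊆ X \ {x} → ¬ x ≤ F.sup' hF id

/-- `ℱ^{<ω}`: unions of finite subfamilies of `ℱ` (including `∅`). -/
def finUnions {α : Type*} (ℱ : Set (Set α)) : Set (Set α) :=
  {S | ∃ G : Finset (Set α), ↑G ⊆ ℱ ∧ S = ⋃₀ ↑G}

/-- `ℱ^∪`: unions of arbitrary subfamilies of `ℱ`. -/
def arbUnions {α : Type*} (ℱ : Set (Set α)) : Set (Set α) :=
  {S | ∃ G ⊆ ℱ, S = ⋃₀ G}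

universe u


section Aux
variable {P : Type u} [SemilatticeSup P]

lemma ideal_sup_mem {I : Set P} (hI : IsIdeal I) {a b : P} :
    a ⊔ b ∈ I ↔ a ∈ I ∧ b ∈ I := by
  obtain ⟨-, hdir, hdown⟩ := hI
  constructor
  · intro h
    exact ⟨hdown a _ le_sup_left h, hdown b _ le_sup_right h⟩
  · rintro ⟨ha, hb⟩
    obtain ⟨z, hz, haz, hbz⟩ := hdir a ha b hb
    exact hdown _ _ (sup_le haz hbz) hz

lemma exists_maximal_ideal_avoiding {G : Set P} (hG : IsIdeal G) {x : P} (hx : x ∉ G) :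
    ∃ M : Set P, G ⊆ M ∧ IsIdeal M ∧ x ∉ M ∧
      ∀ K : Set P, IsIdeal K → x ∉ K → M ⊆ K → K = M := by
  have hchainub : ∀ c ⊆ {I : Set P | IsIdeal I ∧ x ∉ I}, IsChain (· ⊆ ·) c → c.Nonempty →
      ∃ ub ∈ {I : Set P | IsIdeal I ∧ x ∉ I}, ∀ s ∈ c, s ⊆ ub := by
    rintro c hcS hchain ⟨c₀, hc₀⟩
    refine ⟨⋃₀ c, ⟨⟨?_, ?_, ?_⟩, ?_⟩, fun s hs => subset_sUnion_of_mem hs⟩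
    · obtain ⟨y, hy⟩ := (hcS hc₀).1.1
      exact ⟨y, c₀, hc₀, hy⟩
    · rintro a ⟨A, hA, haA⟩ b ⟨B, hB, hbB⟩
      rcases hchain.total hA hB with h | h
      · obtain ⟨z, hz, h1, h2⟩ := (hcS hB).1.2.1 a (h haA) b hbB
        exact ⟨z, ⟨B, hB, hz⟩, h1, h2⟩
      · obtain ⟨z, hz, h1, h2⟩ := (hcS hA).1.2.1 a haA b (h hbB)
        exact ⟨z, ⟨A, hA, hz⟩, h1, h2⟩
    · rintro a b hab ⟨B, hB, hbB⟩
      exact ⟨B, hB, (hcS hB).1.2.2 a b hab hbB⟩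
    · rintro ⟨B, hB, hxB⟩
      exact (hcS hB).2 hxB
  obtain ⟨M, hGM, ⟨hMI, hxM⟩, hmax⟩ := zorn_subset_nonempty
    {I : Set P | IsIdeal I ∧ x ∉ I} hchainub G ⟨hG, hx⟩
  exact ⟨M, hGM, hMI, hxM, fun K hK hxK hMK =>
    (hmax (y := K) ⟨hK, hxK⟩ hMK).antisymm hMK⟩

lemma maximal_avoiding_CMIdeal {M : Set P} {x : P} (hM : IsIdeal M) (hx : x ∉ M)
    (hmax : ∀ K : Set P, IsIdeal K → x ∉ K → M ⊆ K → K = M) : CMIdeal M := by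
  refine ⟨hM, JoinUp x M, ⟨?_, ?_, ?_⟩, ⟨?_, ?_⟩, ?_⟩
  · obtain ⟨y, hy⟩ := hM.1
    exact ⟨x, y, hy, le_sup_left⟩
  · rintro a ⟨y1, hy1, ha⟩ b ⟨y2, hy2, hb⟩
    obtain ⟨z, hz, h1, h2⟩ := hM.2.1 y1 hy1 y2 hy2
    exact ⟨x ⊔ z, ⟨z, hz, le_rfl⟩,
      le_trans ha (sup_le_sup_left h1 x), le_trans hb (sup_le_sup_left h2 x)⟩
  · rintro a b hab ⟨y, hy, hb⟩
    exact ⟨y, hy, hab.trans hb⟩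
  · intro m hm
    exact ⟨m, hm, le_sup_right⟩
  · intro hsub
    obtain ⟨y, hy⟩ := hM.1
    exact hx (hsub ⟨y, hy, le_sup_left⟩)
  · intro K hK hMK z hz
    have hxK : x ∈ K := by
      by_contra hxK
      exact hMK.2 ((hmax K hK hxK hMK.1) ▸ Set.Subset.rfl)
    obtain ⟨y, hy, hzle⟩ := hz
    obtain ⟨w, hw, h1, h2⟩ := hK.2.1 x hxK y (hMK.1 hy)
    exact hK.2.2 z w (hzle.trans (sup_le h1 h2)) hw

lemma ideal_subset_of_subset_sUnion {I : Set P} (hI : IsIdeal I) (𝓖 : Finset (Set P))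
    (h𝓖 : ∀ G ∈ 𝓖, IsIdeal G) (hsub : I ⊆ ⋃₀ ↑𝓖) : ∃ G ∈ 𝓖, I ⊆ G := by
  classical
  induction 𝓖 using Finset.induction with
  | empty =>
    obtain ⟨y, hy⟩ := hI.1
    simpa using hsub hy
  | @insert G 𝓖' hG ih =>
    by_cases hc : I ⊆ ⋃₀ ↑𝓖'
    · obtain ⟨G', hG', h⟩ := ih (fun G hG => h𝓖 G (Finset.mem_insert_of_mem hG)) hc
      exact ⟨G', Finset.mem_insert_of_mem hG', h⟩
    · refine ⟨G, Finset.mem_insert_self _ _, fun b hb => ?_⟩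
      obtain ⟨a, haI, ha⟩ := Set.not_subset.1 hc
      obtain ⟨z, hz, h1, h2⟩ := hI.2.1 a haI b hb
      have := hsub hz
      simp only [Finset.coe_insert, Set.sUnion_insert] at this
      rcases this with hzG | hzU
      · exact (h𝓖 G (Finset.mem_insert_self _ _)).2.2 b z h2 hzG
      · obtain ⟨G', hG', hzG'⟩ := hzU
        exact absurd ⟨G', hG', (h𝓖 G' (Finset.mem_insert_of_mem hG')).2.2 a z h1 hzG'⟩ ha

end Aux

/-- If every set `{y : x ≰ y}` is a finite union of ideals and `Δ(J(P))` is
well-founded, then `P` embeds as a join-subsemilattice into `I_{<ω}(Q)` for some well-founded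
poset `Q`. -/
theorem embeds_wellFounded_finGenInit {P : Type u} [SemilatticeSup P]
    (h1 : ∀ x : P, ∃ 𝓖 : Finset (Set P), (∀ I ∈ 𝓖, IsIdeal I) ∧
      {y : P | ¬ x ≤ y} = ⋃₀ ↑𝓖)
    (h2 : WellFounded (fun I J : {I : Set P // CMIdeal I} => I < J)) :
    ∃ (Q : Type u) (_ : PartialOrder Q), WellFounded ((· < ·) : Q → Q → Prop) ∧
      ∃ f : P → Set Q, (∀ p, f p ∈ FinGenInit Q) ∧ Function.Injective f ∧
        ∀ a b, f (a ⊔ b) = f a ∪ f b := by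
  classical
  refine ⟨{I : Set P // CMIdeal I}, inferInstance, h2,
    fun x => {I : {I : Set P // CMIdeal I} | x ∉ I.1}, ?_, ?_, ?_⟩
  · -- finitely generated initial segments
    intro p
    obtain ⟨𝓖, h𝓖, hU⟩ := h1 p
    have key : ∀ G ∈ 𝓖, ∃ M : {I : Set P // CMIdeal I}, p ∉ M.1 ∧ G ⊆ M.1 := by
      intro G hG
      have hpG : p ∉ G := by
        intro h
        have hmem : p ∈ {y : P | ¬ p ≤ y} := hU ▸ ⟨G, hG, h⟩
        exact hmem le_rfl
      obtain ⟨M, hGM, hMI, hxM, hmax⟩ := exists_maximal_ideal_avoiding (h𝓖 G hG) hpG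
      exact ⟨⟨M, maximal_avoiding_CMIdeal hMI hxM hmax⟩, hxM, hGM⟩
    choose m hm1 hm2 using key
    refine ⟨𝓖.attach.image (fun G => m G.1 G.2), Set.ext fun I => ?_⟩
    constructor
    · intro hpI
      have hIsub : I.1 ⊆ ⋃₀ ↑𝓖 := by
        rw [← hU]
        intro y hy hle
        exact hpI (I.2.1.2.2 p y hle hy)
      obtain ⟨G, hG, hsub⟩ := ideal_subset_of_subset_sUnion I.2.1 𝓖 h𝓖 hIsub
      refine ⟨m G hG, Finset.mem_image.2 ⟨⟨G, hG⟩, Finset.mem_attach _ _, rfl⟩, ?_⟩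
      show I.1 ⊆ (m G hG).1
      exact hsub.trans (hm2 G hG)
    · rintro ⟨J, hJF, hIJ⟩ hpI
      obtain ⟨⟨G, hG⟩, -, rfl⟩ := Finset.mem_image.1 hJF
      exact hm1 G hG (hIJ hpI)
  · -- injectivity
    intro a b hab
    by_contra hne
    have key : ∀ x y : P, ¬ x ≤ y →
        {I : {I : Set P // CMIdeal I} | x ∉ I.1} ≠ {I : {I : Set P // CMIdeal I} | y ∉ I.1} := by
      intro x y hxy heq
      have hdown : IsIdeal {z : P | z ≤ y} :=
        ⟨⟨y, le_rfl⟩, fun u hu v hv => ⟨y, le_rfl, hu, hv⟩, fun u v huv hv => huv.trans hv⟩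
      obtain ⟨M, hGM, hMI, hxM, hmax⟩ := exists_maximal_ideal_avoiding hdown hxy
      have hyM : y ∈ M := hGM le_rfl
      have h1 : (⟨M, maximal_avoiding_CMIdeal hMI hxM hmax⟩ : {I : Set P // CMIdeal I}) ∈
          {I : {I : Set P // CMIdeal I} | x ∉ I.1} := hxM
      rw [heq] at h1
      exact h1 hyM
    by_cases h : a ≤ b
    · exact key b a (fun h' => hne (le_antisymm h h')) hab.symm
    · exact key a b h hab
  · -- join-preserving
    intro a b
    ext I
    have := ideal_sup_mem (P := P) I.2.1 (a := a) (b := b)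
    simp only [Set.mem_setOf_eq, Set.mem_union]
    rw [this]
    tauto
end

section
/- Let P be a join-semilattice. The following are equivalent: (i) there exists a set E such that P embeds as a join-subsemilattice into the join-semilattice of finite subsets of E ordered by inclusion (with join given by union); (ii) for every x ∈ P, the set φ_Δ(x) = {I ∈ Δ(J(P)) : x ∉ I} is finite. -/
open Set

universe u

section Aux
variable {P : Type*} [SemilatticeSup P]

lemma aux_ideal_finset_bound {I : Set P} (hI : IsIdeal I) :
    ∀ F : Finset P, ↑F ⊆ I → ∃ w ∈ I, ∀ y ∈ F, y ≤ w := by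
  classical
  intro F
  induction F using Finset.induction_on with
  | empty =>
      intro _
      obtain ⟨w, hw⟩ := hI.1
      exact ⟨w, hw, fun y hy => absurd hy (by simp)⟩
  | @insert a F ha ih =>
      intro hFI
      have haI : a ∈ I := hFI (Finset.mem_insert_self a F)
      obtain ⟨w, hwI, hw⟩ := ih (fun y hy => hFI (Finset.mem_insert_of_mem hy))
      obtain ⟨z, hzI, haz, hwz⟩ := hI.2.1 a haI w hwI
      refine ⟨z, hzI, fun y hy => ?_⟩
      rcases Finset.mem_insert.1 hy with h | h
      · exact h ▸ haz
      · exact (hw y h).trans hwz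

lemma aux_sup_mem {I : Set P} (hI : IsIdeal I) {a b : P} (ha : a ∈ I) (hb : b ∈ I) :
    a ⊔ b ∈ I := by
  obtain ⟨z, hz, haz, hbz⟩ := hI.2.1 a ha b hb
  exact hI.2.2 _ z (sup_le haz hbz) hz

lemma aux_joinUp_ideal {I : Set P} (hI : IsIdeal I) (x : P) : IsIdeal (JoinUp x I) := by
  obtain ⟨m, hm⟩ := hI.1
  refine ⟨⟨m, m, hm, le_sup_right⟩, ?_, ?_⟩
  · rintro a ⟨y₁, hy₁, ha⟩ b ⟨y₂, hy₂, hb⟩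
    obtain ⟨z, hz, h1, h2⟩ := hI.2.1 y₁ hy₁ y₂ hy₂
    exact ⟨x ⊔ z, ⟨z, hz, le_rfl⟩, ha.trans (sup_le_sup_left h1 x),
      hb.trans (sup_le_sup_left h2 x)⟩
  · rintro a b hab ⟨y, hy, hb⟩
    exact ⟨y, hy, hab.trans hb⟩

lemma aux_subset_joinUp {I : Set P} (x : P) : I ⊆ JoinUp x I :=
  fun z hz => ⟨z, hz, le_sup_right⟩

lemma aux_mem_joinUp {I : Set P} (hI : I.Nonempty) (x : P) : x ∈ JoinUp x I := by
  obtain ⟨m, hm⟩ := hI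
  exact ⟨m, hm, le_sup_left⟩

/-- Separation: if `¬ x ≤ y` there is a CM ideal containing `y` but not `x`. -/
lemma aux_sep (x y : P) (hxy : ¬ x ≤ y) :
    ∃ I : Set P, CMIdeal I ∧ y ∈ I ∧ x ∉ I := by
  set S : Set (Set P) := {I | IsIdeal I ∧ y ∈ I ∧ x ∉ I} with hS
  have hdown : IsIdeal {z : P | z ≤ y} :=
    ⟨⟨y, le_rfl⟩, fun a ha b hb => ⟨y, le_rfl, ha, hb⟩, fun a b hab hb => hab.trans hb⟩
  have hyS : {z : P | z ≤ y} ∈ S := ⟨hdown, le_rfl, hxy⟩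
  obtain ⟨M, -, hMS, hMmax⟩ := zorn_subset_nonempty S (fun c hcS hc hcne => by
    refine ⟨⋃₀ c, ⟨⟨?_, ?_, ?_⟩, ?_, ?_⟩, fun s hs => subset_sUnion_of_mem hs⟩
    · obtain ⟨I, hI⟩ := hcne
      obtain ⟨m, hm⟩ := (hcS hI).1.1
      exact ⟨m, I, hI, hm⟩
    · rintro a ⟨I₁, hI₁, ha⟩ b ⟨I₂, hI₂, hb⟩
      rcases hc.total hI₁ hI₂ with h | h
      · obtain ⟨z, hz, h1, h2⟩ := (hcS hI₂).1.2.1 a (h ha) b hb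
        exact ⟨z, ⟨I₂, hI₂, hz⟩, h1, h2⟩
      · obtain ⟨z, hz, h1, h2⟩ := (hcS hI₁).1.2.1 a ha b (h hb)
        exact ⟨z, ⟨I₁, hI₁, hz⟩, h1, h2⟩
    · rintro a b hab ⟨I₁, hI₁, hb⟩
      exact ⟨I₁, hI₁, (hcS hI₁).1.2.2 a b hab hb⟩
    · obtain ⟨I, hI⟩ := hcne
      exact ⟨I, hI, (hcS hI).2.1⟩
    · rintro ⟨I₁, hI₁, hx⟩
      exact (hcS hI₁).2.2 hx) _ hyS
  obtain ⟨hMideal, hyM, hxM⟩ := hMS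
  refine ⟨M, ⟨hMideal, JoinUp x M, aux_joinUp_ideal hMideal x,
    ⟨aux_subset_joinUp x, fun h => hxM (h (aux_mem_joinUp hMideal.1 x))⟩, ?_⟩, hyM, hxM⟩
  intro K hK hMK
  have hxK : x ∈ K := by
    by_contra hxK
    have : K ∈ S := ⟨hK, hMK.1 hyM, hxK⟩
    exact hMK.2 (hMmax this hMK.1)
  rintro z ⟨w, hw, hz⟩
  exact hK.2.2 z (x ⊔ w) hz (aux_sup_mem hK hxK (hMK.1 hw))

end Aux

/-- A join-semilattice `P` embeds as a join-subsemilattice into the finite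
subsets of some set `E` iff for every `x ∈ P` the set `φ_Δ(x) = {I ∈ Δ(J(P)) : x ∉ I}` is
finite. -/


theorem embeds_finsets_iff_phiDelta_finite {P : Type u} [SemilatticeSup P] :
    (∃ (E : Type u) (_ : DecidableEq E) (f : P → Finset E),
        Function.Injective f ∧ ∀ a b, f (a ⊔ b) = f a ∪ f b) ↔
      ∀ x : P, {I : Set P | CMIdeal I ∧ x ∉ I}.Finite := by
  classical
  constructor
  · rintro ⟨E, _, f, hinj, hsup⟩ x
    have hmono : ∀ {a b : P}, a ≤ b → f a ⊆ f b := by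
      intro a b hab
      have h := hsup a b
      rw [sup_eq_right.2 hab] at h
      exact h ▸ Finset.subset_union_left
    have hle : ∀ {a b : P}, f a ⊆ f b → a ≤ b := by
      intro a b hab
      have h : f (a ⊔ b) = f b := by
        rw [hsup]; exact Finset.union_eq_right.2 hab
      exact sup_eq_right.1 (hinj h)
    set U : Set P → Set E := fun I => ⋃ y ∈ I, ↑(f y) with hUdef
    have hUmem : ∀ {I : Set P} {e : E}, e ∈ U I ↔ ∃ y ∈ I, e ∈ f y := by
      intro I e; simp [hUdef]
    have hmemU : ∀ {I : Set P}, IsIdeal I → ∀ {z : P}, ↑(f z) ⊆ U I → z ∈ I := by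
      intro I hI z hz
      choose g hg hg' using fun (e : {e // e ∈ f z}) => hUmem.1 (hz e.2)
      obtain ⟨w, hwI, hw⟩ := aux_ideal_finset_bound hI ((f z).attach.image g)
        (by
          intro y hy
          simp only [Finset.coe_image, Set.mem_image] at hy
          obtain ⟨e, -, rfl⟩ := hy
          exact hg e)
      refine hI.2.2 z w (hle ?_) hwI
      intro e he
      exact hmono (hw _ (Finset.mem_image_of_mem g (Finset.mem_attach _ ⟨e, he⟩))) (hg' ⟨e, he⟩)
    have hkey : ∀ I₁ I₂ : Set P, CMIdeal I₁ → IsIdeal I₂ → x ∉ I₁ →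
        (∀ e ∈ f x, e ∈ U I₂ → e ∈ U I₁) → I₂ ⊆ I₁ := by
      intro I₁ I₂ hI₁ hI₂ hx1 hsub
      by_contra hns
      obtain ⟨a, haI₂, haI₁⟩ := Set.not_subset.1 hns
      obtain ⟨hI₁i, J, hJ, hIJ, hJmin⟩ := hI₁
      have hJa : J ⊆ JoinUp a I₁ :=
        hJmin _ (aux_joinUp_ideal hI₁i a)
          ⟨aux_subset_joinUp a, fun h => haI₁ (h (aux_mem_joinUp hI₁i.1 a))⟩
      have hJx : J ⊆ JoinUp x I₁ :=
        hJmin _ (aux_joinUp_ideal hI₁i x)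
          ⟨aux_subset_joinUp x, fun h => hx1 (h (aux_mem_joinUp hI₁i.1 x))⟩
      obtain ⟨c, hcJ, hcI₁⟩ := Set.exists_of_ssubset hIJ
      obtain ⟨y₁, hy₁, hc₁⟩ := hJa hcJ
      obtain ⟨y₂, hy₂, hc₂⟩ := hJx hcJ
      have hfc : ¬ (↑(f c) ⊆ U I₁) := fun h => hcI₁ (hmemU hI₁i h)
      obtain ⟨e, hec, heU⟩ := Set.not_subset.1 hfc
      have hey₁ : e ∉ f y₁ := fun h => heU (hUmem.2 ⟨y₁, hy₁, h⟩)
      have hey₂ : e ∉ f y₂ := fun h => heU (hUmem.2 ⟨y₂, hy₂, h⟩)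
      have hex : e ∈ f x := by
        have h1 : e ∈ f (x ⊔ y₂) := hmono hc₂ hec
        rw [hsup] at h1
        rcases Finset.mem_union.1 h1 with h | h
        · exact h
        · exact absurd h hey₂
      have hea : e ∈ f a := by
        have h1 : e ∈ f (a ⊔ y₁) := hmono hc₁ hec
        rw [hsup] at h1
        rcases Finset.mem_union.1 h1 with h | h
        · exact h
        · exact absurd h hey₁
      exact heU (hsub e hex (hUmem.2 ⟨a, haI₂, hea⟩))
    refine Set.Finite.of_finite_image (f := fun I => (↑(f x) : Set E) \ U I) ?_ ?_
    · refine ((f x).finite_toSet.finite_subsets).subset ?_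
      rintro t ⟨I, -, rfl⟩
      exact Set.diff_subset
    · intro I₁ h₁ I₂ h₂ heq0
      have heq : (↑(f x) : Set E) \ U I₁ = ↑(f x) \ U I₂ := heq0
      have hsub12 : ∀ e ∈ f x, e ∈ U I₂ → e ∈ U I₁ := by
        intro e he h2
        by_contra h1
        have : e ∈ (↑(f x) : Set E) \ U I₂ := heq ▸ ⟨he, h1⟩
        exact this.2 h2
      have hsub21 : ∀ e ∈ f x, e ∈ U I₁ → e ∈ U I₂ := by
        intro e he h1
        by_contra h2
        have : e ∈ (↑(f x) : Set E) \ U I₁ := heq.symm ▸ ⟨he, h2⟩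
        exact this.2 h1
      exact Set.Subset.antisymm
        (hkey I₂ I₁ h₂.1 h₁.1.1 h₂.2 hsub21)
        (hkey I₁ I₂ h₁.1 h₂.1.1 h₁.2 hsub12)
  · intro hfin
    have hfinE : ∀ x : P, ({I : {I : Set P // CMIdeal I} | x ∉ I.1}).Finite := by
      intro x
      have h1 : (Subtype.val ⁻¹' {I : Set P | CMIdeal I ∧ x ∉ I} :
          Set {I : Set P // CMIdeal I}).Finite :=
        (hfin x).preimage (Set.injOn_of_injective Subtype.val_injective)
      refine h1.subset ?_
      intro I hI
      exact ⟨I.2, hI⟩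
    refine ⟨{I : Set P // CMIdeal I}, Classical.decEq _,
      fun x => (hfinE x).toFinset, ?_, ?_⟩
    · have hle : ∀ a b : P, (hfinE a).toFinset = (hfinE b).toFinset → a ≤ b := by
        intro a b h
        by_contra hab
        obtain ⟨I, hICM, hbI, haI⟩ := aux_sep a b hab
        have hma : (⟨I, hICM⟩ : {I : Set P // CMIdeal I}) ∈ (hfinE a).toFinset := by
          rw [Set.Finite.mem_toFinset]; exact haI
        rw [h, Set.Finite.mem_toFinset] at hma
        exact hma hbI
      intro a b h
      exact le_antisymm (hle a b h) (hle b a h.symm)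
    · intro a b
      ext I
      simp only [Set.Finite.mem_toFinset, Set.mem_setOf_eq, Finset.mem_union]
      have hsup_mem : a ⊔ b ∈ I.1 ↔ a ∈ I.1 ∧ b ∈ I.1 := by
        constructor
        · intro h
          exact ⟨I.2.1.2.2 a _ le_sup_left h, I.2.1.2.2 b _ le_sup_right h⟩
        · rintro ⟨ha, hb⟩
          exact aux_sup_mem I.2.1 ha hb
      tauto
end
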